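/- arXiv:2301.06440 — 3 statements merged into one kernel-verified Lean document; each statement's English description precedes it below -/
import Mathlib

section
/- For any field K of characteristic zero and any nonzero tuple (x₁, x₂, x₃, x₄) ∈ K⁴ satisfying the six defining equations of the curve X, the triple (X, Y, Z) = (x₂x₃ + x₃x₄, x₂² + x₂x₄ − x₃x₄ + x₄², x₃x₄) satisfies the Weierstrass relation Y²Z + XYZ + YZ² = X³ − X²Z. (In other words, the map ψ(x₁ : x₂ : x₃ : x₄) = (x₂x₃ + x₃x₄ : x₂² + x₂x₄ − x₃x₄ + x₄² : x₃x₄) sends points of X to points of the elliptic curve E : Y²Z + XYZ + YZ² = X³ − X²Z.) -/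
/-- The six defining homogeneous equations of the model of the modular curve `X₀(53)`
in `ℙ³` with coordinates `x₁, x₂, x₃, x₄`. -/
def OnX {K : Type*} [Field K] (x₁ x₂ x₃ x₄ : K) : Prop :=
  x₁ ^ 2 - x₂ ^ 2 + 2 * x₂ * x₃ - 6 * x₂ * x₄ + 11 * x₃ ^ 2 - 6 * x₃ * x₄ - x₄ ^ 2 = 0 ∧
  x₁ ^ 3 - x₁ * x₂ ^ 2 + 2 * x₁ * x₂ * x₃ - 6 * x₁ * x₂ * x₄ + 11 * x₁ * x₃ ^ 2
    - 6 * x₁ * x₃ * x₄ - x₁ * x₄ ^ 2 = 0 ∧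
  x₁ ^ 2 * x₂ - x₂ ^ 3 + 2 * x₂ ^ 2 * x₃ + 5 * x₂ * x₃ ^ 2 + 5 * x₂ * x₄ ^ 2
    - 6 * x₃ ^ 2 * x₄ + 6 * x₄ ^ 3 = 0 ∧
  x₁ ^ 2 * x₃ - x₂ ^ 2 * x₃ + 2 * x₂ * x₃ ^ 2 - 6 * x₂ * x₃ * x₄ + 11 * x₃ ^ 3
    - 6 * x₃ ^ 2 * x₄ - x₃ * x₄ ^ 2 = 0 ∧
  x₁ ^ 2 * x₄ - x₂ * x₃ ^ 2 + 3 * x₂ * x₃ * x₄ - 5 * x₂ * x₄ ^ 2 + 10 * x₃ ^ 2 * x₄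
    - 6 * x₃ * x₄ ^ 2 = 0 ∧
  x₂ ^ 2 * x₄ - x₂ * x₃ ^ 2 + x₂ * x₃ * x₄ + x₂ * x₄ ^ 2 - x₃ ^ 2 * x₄ + x₄ ^ 3 = 0

/-- The map `ψ(x₁ : x₂ : x₃ : x₄) = (x₂x₃ + x₃x₄ : x₂² + x₂x₄ − x₃x₄ + x₄² : x₃x₄)` sends
points of `X` to points of the elliptic curve `E : Y²Z + XYZ + YZ² = X³ − X²Z`. -/
theorem psi_maps_X_to_E {K : Type*} [Field K] [CharZero K] (x₁ x₂ x₃ x₄ : K)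
    (hne : ¬(x₁ = 0 ∧ x₂ = 0 ∧ x₃ = 0 ∧ x₄ = 0)) (hX : OnX x₁ x₂ x₃ x₄) :
    (x₂ ^ 2 + x₂ * x₄ - x₃ * x₄ + x₄ ^ 2) ^ 2 * (x₃ * x₄)
      + (x₂ * x₃ + x₃ * x₄) * (x₂ ^ 2 + x₂ * x₄ - x₃ * x₄ + x₄ ^ 2) * (x₃ * x₄)
      + (x₂ ^ 2 + x₂ * x₄ - x₃ * x₄ + x₄ ^ 2) * (x₃ * x₄) ^ 2
      = (x₂ * x₃ + x₃ * x₄) ^ 3 - (x₂ * x₃ + x₃ * x₄) ^ 2 * (x₃ * x₄) := by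
  have h0 : x₁ ≠ 0 ∨ x₂ ≠ 0 ∨ x₃ ≠ 0 ∨ x₄ ≠ 0 := by
    by_contra h
    push_neg at h
    exact hne ⟨h.1, h.2.1, h.2.2.1, h.2.2.2⟩
  obtain ⟨h1, h2, h3, h4, h5, h6⟩ := hX
  rcases h0 with hx | hx | hx | hx
  · refine mul_left_cancel₀ hx ?_
    linear_combination (-1/6) * (x₁ ^ 3 * x₂ * x₃) * h1 +
      (-1/3) * (x₁ * x₂ ^ 2 * x₃ ^ 2) * h1 +
      (-1/6) * (x₁ * x₂ ^ 2 * x₃ * x₄) * h1 +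
      (-5/6) * (x₁ * x₂ * x₃ ^ 3) * h1 +
      (-1) * (x₁ * x₂ * x₃ * x₄ ^ 2) * h1 +
      1 * (x₁ * x₃ ^ 3 * x₄) * h1 +
      (-1) * (x₁ * x₃ * x₄ ^ 3) * h1 +
      (1/6) * (x₁ ^ 3 * x₃) * h3 +
      (1/3) * (x₁ * x₂ * x₃ ^ 2) * h3 +
      (-5/6) * (x₁ * x₂ * x₃ * x₄) * h3 +
      (11/6) * (x₁ * x₃ ^ 3) * h3 +
      (-1) * (x₁ * x₃ ^ 2 * x₄) * h3
  · refine mul_left_cancel₀ hx ?_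
    linear_combination (-1/6) * (x₁ ^ 2 * x₂ ^ 2 * x₃) * h1 +
      (-1/3) * (x₂ ^ 3 * x₃ ^ 2) * h1 +
      (-1/6) * (x₂ ^ 3 * x₃ * x₄) * h1 +
      (-5/6) * (x₂ ^ 2 * x₃ ^ 3) * h1 +
      (-1) * (x₂ ^ 2 * x₃ * x₄ ^ 2) * h1 +
      1 * (x₂ * x₃ ^ 3 * x₄) * h1 +
      (-1) * (x₂ * x₃ * x₄ ^ 3) * h1 +
      (1/6) * (x₁ ^ 2 * x₂ * x₃) * h3 +
      (1/3) * (x₂ ^ 2 * x₃ ^ 2) * h3 +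
      (-5/6) * (x₂ ^ 2 * x₃ * x₄) * h3 +
      (11/6) * (x₂ * x₃ ^ 3) * h3 +
      (-1) * (x₂ * x₃ ^ 2 * x₄) * h3
  · refine mul_left_cancel₀ hx ?_
    linear_combination (-1/6) * (x₁ ^ 2 * x₂ * x₃ ^ 2) * h1 +
      (-1/3) * (x₂ ^ 2 * x₃ ^ 3) * h1 +
      (-1/6) * (x₂ ^ 2 * x₃ ^ 2 * x₄) * h1 +
      (-5/6) * (x₂ * x₃ ^ 4) * h1 +
      (-1) * (x₂ * x₃ ^ 2 * x₄ ^ 2) * h1 +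
      1 * (x₃ ^ 4 * x₄) * h1 +
      (-1) * (x₃ ^ 2 * x₄ ^ 3) * h1 +
      (1/6) * (x₁ ^ 2 * x₃ ^ 2) * h3 +
      (1/3) * (x₂ * x₃ ^ 3) * h3 +
      (-5/6) * (x₂ * x₃ ^ 2 * x₄) * h3 +
      (11/6) * (x₃ ^ 4) * h3 +
      (-1) * (x₃ ^ 3 * x₄) * h3
  · refine mul_left_cancel₀ hx ?_
    linear_combination (5/6) * (x₁ ^ 2 * x₂ ^ 2 * x₃) * h1 +
      1 * (x₁ ^ 2 * x₂ * x₃ ^ 2) * h1 +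
      (-1/6) * (x₁ ^ 2 * x₂ * x₃ * x₄) * h1 +
      (-5/6) * (x₂ ^ 4 * x₃) * h1 +
      (2/3) * (x₂ ^ 3 * x₃ ^ 2) * h1 +
      (37/6) * (x₂ ^ 2 * x₃ ^ 3) * h1 +
      (-1/3) * (x₂ ^ 2 * x₃ ^ 2 * x₄) * h1 +
      4 * (x₂ ^ 2 * x₃ * x₄ ^ 2) * h1 +
      5 * (x₂ * x₃ ^ 4) * h1 +
      (-35/6) * (x₂ * x₃ ^ 3 * x₄) * h1 +
      5 * (x₂ * x₃ ^ 2 * x₄ ^ 2) * h1 +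
      4 * (x₂ * x₃ * x₄ ^ 3) * h1 +
      (-6) * (x₃ ^ 4 * x₄) * h1 +
      1 * (x₃ ^ 3 * x₄ ^ 2) * h1 +
      6 * (x₃ ^ 2 * x₄ ^ 3) * h1 +
      (-1) * (x₃ * x₄ ^ 4) * h1 +
      (-5/6) * (x₁ ^ 2 * x₂ * x₃) * h3 +
      (-1) * (x₁ ^ 2 * x₃ ^ 2) * h3 +
      (1/6) * (x₁ ^ 2 * x₃ * x₄) * h3 +
      (5/6) * (x₂ ^ 3 * x₃) * h3 +
      (-2/3) * (x₂ ^ 2 * x₃ ^ 2) * h3 +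
      5 * (x₂ ^ 2 * x₃ * x₄) * h3 +
      (-67/6) * (x₂ * x₃ ^ 3) * h3 +
      (34/3) * (x₂ * x₃ ^ 2 * x₄) * h3 +
      (-11) * (x₃ ^ 4) * h3 +
      (47/6) * (x₃ ^ 3 * x₄) * h3
end

section
/- Let d be a squarefree integer with d ≠ 1, let K = ℚ(√d), and let σ be the nontrivial element of Gal(K/ℚ). Let w : ℙ³ → ℙ³ be the involution (x₁ : x₂ : x₃ : x₄) ↦ (−x₁ : x₂ : x₃ : x₄). If P ∈ ℙ³(K) satisfies σ(P) = w(P) (as projective points), then P admits homogeneous coordinates of the form (b√d : a₂ : a₃ : a₄) with b, a₂, a₃, a₄ ∈ ℚ. -/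
/-- No rational square root of a squarefree integer `d ≠ 1`. -/
lemma no_rat_sqrt (d : ℤ) (hd : Squarefree d) (hd1 : d ≠ 1) (q : ℚ) :
    q ^ 2 ≠ (d : ℚ) := by
  intro hq
  have hden : q.den = 1 := by
    have h1 : (q ^ 2).den = 1 := by rw [hq]; exact Rat.den_intCast d
    rw [Rat.den_pow] at h1
    nlinarith [q.pos]
  have hnum : q.num ^ 2 = d := by
    have h0 : ((q.num : ℚ)) = q := (Rat.den_eq_one_iff q).mp hden
    have h2 : ((q.num ^ 2 : ℤ) : ℚ) = ((d : ℤ) : ℚ) := by push_cast; rw [h0, hq]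
    exact_mod_cast h2
  have hu : IsUnit q.num := hd q.num (by rw [← hnum]; ring_nf; exact dvd_rfl)
  rcases Int.isUnit_iff.mp hu with h | h <;> rw [h] at hnum <;> simp at hnum <;> omega

/-- Let `K = ℚ(√d)` with `d` squarefree, `d ≠ 1`, let `σ` be the nontrivial element of
`Gal(K/ℚ)` (determined by `σ(√d) = -√d`), and let `w : ℙ³ → ℙ³` be the involution
`(x₁ : x₂ : x₃ : x₄) ↦ (−x₁ : x₂ : x₃ : x₄)`.  If a point `P ∈ ℙ³(K)`, given by a nonzero
coordinate tuple `x`, satisfies `σ(P) = w(P)` as projective points, then `P` admits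
homogeneous coordinates of the form `(b√d : a₂ : a₃ : a₄)` with `b, a₂, a₃, a₄ ∈ ℚ`. -/
theorem sigma_eq_w_coords (d : ℤ) (hd : Squarefree d) (hd1 : d ≠ 1)
    {K : Type*} [Field K] [Algebra ℚ K] (s : K) (hs : s ^ 2 = (d : K))
    (hspan : ∀ x : K, ∃ a b : ℚ, x = algebraMap ℚ K a + algebraMap ℚ K b * s)
    (σ : K →+* K) (hσ : σ s = -s)
    (x : Fin 4 → K) (hx : x ≠ 0)
    (hfix : ∃ μ : K, μ ≠ 0 ∧ σ (x 0) = μ * (-(x 0)) ∧ σ (x 1) = μ * x 1 ∧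
      σ (x 2) = μ * x 2 ∧ σ (x 3) = μ * x 3) :
    ∃ (lam : K) (b a₂ a₃ a₄ : ℚ), lam ≠ 0 ∧
      x 0 = lam * (algebraMap ℚ K b * s) ∧
      x 1 = lam * algebraMap ℚ K a₂ ∧
      x 2 = lam * algebraMap ℚ K a₃ ∧
      x 3 = lam * algebraMap ℚ K a₄ := by
  have hinj := (algebraMap ℚ K).injective
  have hcomm : ∀ a : ℚ, σ (algebraMap ℚ K a) = algebraMap ℚ K a := by
    intro a
    exact RingHom.congr_fun (Subsingleton.elim (σ.comp (algebraMap ℚ K)) (algebraMap ℚ K)) a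
  have hs0 : s ≠ 0 := by
    intro h
    have h2 : algebraMap ℚ K ((d : ℤ) : ℚ) = algebraMap ℚ K 0 := by
      rw [map_intCast, map_zero, ← hs, h]; ring
    have := hinj h2
    exact hd.ne_zero (by exact_mod_cast this)
  -- uniqueness of decomposition
  have huniq : ∀ a b a' b' : ℚ, algebraMap ℚ K a + algebraMap ℚ K b * s =
      algebraMap ℚ K a' + algebraMap ℚ K b' * s → a = a' ∧ b = b' := by
    intro a b a' b' h
    by_cases hb : b = b'
    · subst hb
      have : algebraMap ℚ K a = algebraMap ℚ K a' := by linear_combination h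
      exact ⟨hinj this, rfl⟩
    · exfalso
      have hbb : algebraMap ℚ K (b - b') ≠ 0 := by
        rw [map_sub, sub_ne_zero]; exact fun hc => hb (hinj hc)
      have hseq : s = algebraMap ℚ K ((a' - a) / (b - b')) := by
        rw [map_div₀, eq_div_iff hbb, map_sub, map_sub]
        linear_combination h
      apply no_rat_sqrt d hd hd1 ((a' - a) / (b - b'))
      apply hinj
      rw [map_pow, ← hseq, hs, map_intCast]
  obtain ⟨μ, hμ0, h0, h1, h2, h3⟩ := hfix
  have hσσ : ∀ y : K, σ (σ y) = y := by
    intro y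
    obtain ⟨a, b, rfl⟩ := hspan y
    simp [map_add, map_mul, hcomm, hσ]
  have hnorm : σ μ * μ = 1 := by
    have key : ∀ y : K, y ≠ 0 → σ y = μ * y → σ μ * μ = 1 := by
      intro y hy hσy
      have e : y = σ μ * (μ * y) := by
        conv_lhs => rw [← hσσ y, hσy, map_mul, hσy]
      have h' : (σ μ * μ - 1) * y = 0 := by linear_combination -e
      rcases mul_eq_zero.mp h' with h | h
      · linear_combination h
      · exact absurd h hy
    obtain ⟨i, hi⟩ := Function.ne_iff.mp hx
    fin_cases i
    · have hi0 : x 0 ≠ 0 := by simpa using hi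
      have e : x 0 = σ μ * -(μ * -(x 0)) := by
        conv_lhs => rw [← hσσ (x 0), h0, map_mul, map_neg, h0]
      have h' : (σ μ * μ - 1) * x 0 = 0 := by linear_combination -e
      rcases mul_eq_zero.mp h' with h | h
      · linear_combination h
      · exact absurd h hi0
    · exact key (x 1) (by simpa using hi) h1
    · exact key (x 2) (by simpa using hi) h2
    · exact key (x 3) (by simpa using hi) h3
  -- find lam ≠ 0 with σ lam = μ * lam
  obtain ⟨lam, hlam0, hlameq⟩ : ∃ lam : K, lam ≠ 0 ∧ σ lam = μ * lam := by
    by_cases hμ1 : μ = -1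
    · exact ⟨s, hs0, by rw [hσ, hμ1]; ring⟩
    · refine ⟨1 + σ μ, ?_, ?_⟩
      · intro h
        apply hμ1
        have h4 : σ μ = -1 := by linear_combination h
        have h5 := congrArg σ h4
        rw [hσσ, map_neg, map_one] at h5
        exact h5
      · rw [map_add, map_one, hσσ]
        linear_combination -hnorm
  -- description of fixed / anti-fixed elements
  have hfix1 : ∀ y : K, σ y = y → ∃ a : ℚ, y = algebraMap ℚ K a := by
    intro y hy
    obtain ⟨a, b, rfl⟩ := hspan y
    rw [map_add, map_mul, hcomm, hcomm, hσ] at hy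
    have hb := (huniq a (-b) a b (by rw [map_neg]; linear_combination hy)).2
    have hb0 : b = 0 := by linarith
    subst hb0
    exact ⟨a, by simp⟩
  have hfix2 : ∀ y : K, σ y = -y → ∃ b : ℚ, y = algebraMap ℚ K b * s := by
    intro y hy
    obtain ⟨a, b, rfl⟩ := hspan y
    rw [map_add, map_mul, hcomm, hcomm, hσ] at hy
    have ha := (huniq a (-b) (-a) (-b) (by rw [map_neg, map_neg]; linear_combination hy)).1
    have ha0 : a = 0 := by linarith
    subst ha0
    exact ⟨b, by simp⟩
  have cancel : μ * μ⁻¹ = 1 := mul_inv_cancel₀ hμ0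
  obtain ⟨b, hb⟩ := hfix2 (x 0 * lam⁻¹) (by
    rw [map_mul, h0, map_inv₀, hlameq, mul_inv]
    rw [show μ * -x 0 * (μ⁻¹ * lam⁻¹) = (μ * μ⁻¹) * -(x 0 * lam⁻¹) from by ring,
      cancel, one_mul])
  obtain ⟨a₂, ha₂⟩ := hfix1 (x 1 * lam⁻¹) (by
    rw [map_mul, h1, map_inv₀, hlameq, mul_inv]
    rw [show μ * x 1 * (μ⁻¹ * lam⁻¹) = (μ * μ⁻¹) * (x 1 * lam⁻¹) from by ring,
      cancel, one_mul])
  obtain ⟨a₃, ha₃⟩ := hfix1 (x 2 * lam⁻¹) (by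
    rw [map_mul, h2, map_inv₀, hlameq, mul_inv]
    rw [show μ * x 2 * (μ⁻¹ * lam⁻¹) = (μ * μ⁻¹) * (x 2 * lam⁻¹) from by ring,
      cancel, one_mul])
  obtain ⟨a₄, ha₄⟩ := hfix1 (x 3 * lam⁻¹) (by
    rw [map_mul, h3, map_inv₀, hlameq, mul_inv]
    rw [show μ * x 3 * (μ⁻¹ * lam⁻¹) = (μ * μ⁻¹) * (x 3 * lam⁻¹) from by ring,
      cancel, one_mul])
  refine ⟨lam, b, a₂, a₃, a₄, hlam0, ?_, ?_, ?_, ?_⟩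
  · rw [← hb, mul_comm lam, mul_assoc, inv_mul_cancel₀ hlam0, mul_one]
  · rw [← ha₂, mul_comm lam, mul_assoc, inv_mul_cancel₀ hlam0, mul_one]
  · rw [← ha₃, mul_comm lam, mul_assoc, inv_mul_cancel₀ hlam0, mul_one]
  · rw [← ha₄, mul_comm lam, mul_assoc, inv_mul_cancel₀ hlam0, mul_one]
end

section
/- For each d ∈ {−43, −11, −7, −1}, there exists a point of X defined over the quadratic field ℚ(√d) that is not defined over ℚ; that is, X(ℚ(√d)) ≠ X(ℚ). -/
/-- A point of `ℙ³` with coordinates in a field `K ⊇ ℚ` is defined over `ℚ` if it admits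
homogeneous coordinates all lying in `ℚ`. -/
def DefinedOverQ {K : Type*} [Field K] [Algebra ℚ K] (x : Fin 4 → K) : Prop :=
  ∃ lam : K, lam ≠ 0 ∧ ∃ q : Fin 4 → ℚ, ∀ i, x i = lam * algebraMap ℚ K (q i)

/-- If `x 0 = c • s` with `s² = d < 0` and some coordinate `x j` is a nonzero rational,
then `x` is not defined over `ℚ`. -/
lemma not_definedOverQ_aux {K : Type*} [Field K] [Algebra ℚ K]
    (d : ℤ) (hd : d < 0) (s : K) (hs : s ^ 2 = (d : K))
    (x : Fin 4 → K) (c r : ℚ) (j : Fin 4)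
    (h0 : x 0 = algebraMap ℚ K c * s) (hj : x j = algebraMap ℚ K r) (hr : r ≠ 0)
    (hc : c ≠ 0) : ¬ DefinedOverQ x := by
  rintro ⟨lam, hlam, q, hq⟩
  have inj : Function.Injective (algebraMap ℚ K) := (algebraMap ℚ K).injective
  have h1 := hq 0
  rw [h0] at h1
  have h2 := hq j
  rw [hj] at h2
  have hqj : q j ≠ 0 := by
    intro h
    apply hr
    apply inj
    rw [map_zero, h2, h, map_zero, mul_zero]
  have hc' : algebraMap ℚ K c ≠ 0 := fun h => hc (inj (h.trans (map_zero _).symm))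
  have hqj' : algebraMap ℚ K (q j) ≠ 0 := fun h => hqj (inj (h.trans (map_zero _).symm))
  set t : ℚ := r * q 0 / (q j * c) with ht
  have key : s = algebraMap ℚ K t := by
    rw [ht, map_div₀, map_mul, map_mul,
      eq_div_iff (mul_ne_zero hqj' hc')]
    linear_combination (algebraMap ℚ K (q j)) * h1 - (algebraMap ℚ K (q 0)) * h2
  have ht2 : t ^ 2 = (d : ℚ) := by
    apply inj
    rw [map_pow, ← key, hs]
    simp
  have h1 : (0 : ℚ) ≤ t ^ 2 := sq_nonneg t
  rw [ht2] at h1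
  have h2 : (d : ℚ) < 0 := by exact_mod_cast hd
  linarith

/-- For each `d ∈ {−43, −11, −7, −1}`, there is a point of the model `X` of `X₀(53)` defined
over the quadratic field `ℚ(√d)` that is not defined over `ℚ`; that is,
`X(ℚ(√d)) ≠ X(ℚ)`. -/
theorem X53_quadratic_points_exist (d : ℤ) (hdD : d ∈ ({-43, -11, -7, -1} : Set ℤ))
    {K : Type*} [Field K] [Algebra ℚ K] (s : K) (hs : s ^ 2 = (d : K))
    (hspan : ∀ x : K, ∃ a b : ℚ, x = algebraMap ℚ K a + algebraMap ℚ K b * s) :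
    ∃ x : Fin 4 → K, x ≠ 0 ∧ OnX (x 0) (x 1) (x 2) (x 3) ∧ ¬ DefinedOverQ x := by
  have inj : Function.Injective (algebraMap ℚ K) := (algebraMap ℚ K).injective
  haveI : CharZero K := charZero_of_injective_algebraMap inj
  simp only [Set.mem_insert_iff, Set.mem_singleton_iff] at hdD
  rcases hdD with rfl | rfl | rfl | rfl
  · -- d = -43 : point (s, 2, 3, 2)
    have hs' : s ^ 2 = -43 := by rw [hs]; push_cast; ring
    refine ⟨![s, 2, 3, 2], ?_, ?_, ?_⟩
    · intro h
      have := congrFun h 1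
      simp at this
    · simp only [Matrix.cons_val_zero, Matrix.cons_val_one, Matrix.head_cons,
        Matrix.cons_val_two, Matrix.tail_cons, Matrix.cons_val_three]
      refine ⟨by linear_combination hs', by linear_combination s * hs',
        by linear_combination 2 * hs', by linear_combination 3 * hs',
        by linear_combination 2 * hs', by ring⟩
    · refine not_definedOverQ_aux (-43) (by norm_num) s hs _ 1 2 1
        ?_ ?_ (by norm_num) (by norm_num)
      · simp
      · simp
  · -- d = -11 : point (s, 0, 1, 0)
    have hs' : s ^ 2 = -11 := by rw [hs]; push_cast; ring
    refine ⟨![s, 0, 1, 0], ?_, ?_, ?_⟩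
    · intro h
      have := congrFun h 2
      simp at this
    · simp only [Matrix.cons_val_zero, Matrix.cons_val_one, Matrix.head_cons,
        Matrix.cons_val_two, Matrix.tail_cons, Matrix.cons_val_three]
      refine ⟨by linear_combination hs', by linear_combination s * hs',
        by ring, by linear_combination hs', by ring, by ring⟩
    · refine not_definedOverQ_aux (-11) (by norm_num) s hs _ 1 1 2
        ?_ ?_ (by norm_num) (by norm_num)
      · simp
      · simp
  · -- d = -7 : point (s, 1, -1, 1)
    have hs' : s ^ 2 = -7 := by rw [hs]; push_cast; ring
    refine ⟨![s, 1, -1, 1], ?_, ?_, ?_⟩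
    · intro h
      have := congrFun h 1
      simp at this
    · simp only [Matrix.cons_val_zero, Matrix.cons_val_one, Matrix.head_cons,
        Matrix.cons_val_two, Matrix.tail_cons, Matrix.cons_val_three]
      refine ⟨by linear_combination hs', by linear_combination s * hs',
        by linear_combination hs', by linear_combination (-1 : K) * hs',
        by linear_combination hs', by ring⟩
    · refine not_definedOverQ_aux (-7) (by norm_num) s hs _ 1 1 1
        ?_ ?_ (by norm_num) (by norm_num)
      · simp
      · simp
  · -- d = -1 : point (2s, 0, 1, 1)
    have hs' : s ^ 2 = -1 := by rw [hs]; push_cast; ring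
    refine ⟨![2 * s, 0, 1, 1], ?_, ?_, ?_⟩
    · intro h
      have := congrFun h 2
      simp at this
    · simp only [Matrix.cons_val_zero, Matrix.cons_val_one, Matrix.head_cons,
        Matrix.cons_val_two, Matrix.tail_cons, Matrix.cons_val_three]
      refine ⟨by linear_combination 4 * hs', by linear_combination 8 * s * hs',
        by ring, by linear_combination 4 * hs', by linear_combination 4 * hs', by ring⟩
    · refine not_definedOverQ_aux (-1) (by norm_num) s hs _ 2 1 2
        ?_ ?_ (by norm_num) (by norm_num)
      · simp
      · simp
end
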